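/- Let G and G' be node-neighboring graphs on V with G ⊆ G', differing at a vertex u, and let τ ∈ ℕ. Then LPDelN(G, τ) ≤ LPDelN(G', τ) ≤ LPDelN(G, τ) + 1. (Equivalently, the paper's query Q_LP-Del-N = −LPDelN has global sensitivity 1 under node-level neighboring and is sensitivity-monotonic.) -/

import Mathlib

open scoped symmDiff

variable {V : Type*}

noncomputable section

/-- Degree of a vertex `v` in `G`. -/
def deg [Fintype V] (G : SimpleGraph V) (v : V) : ℕ :=
  (G.neighborSet v).ncard

/-- Maximum degree of `G`. -/
def maxDeg [Fintype V] (G : SimpleGraph V) : ℕ :=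
  Finset.univ.sup (deg G)

/-- Number of vertices of `G` with degree at least `τ`. -/
def Ntau [Fintype V] (G : SimpleGraph V) (τ : ℕ) : ℕ :=
  {v : V | τ ≤ deg G v}.ncard

/-- Edge distance: the number of edges in the symmetric difference of the edge sets. -/
def edgeDist (G G' : SimpleGraph V) : ℕ :=
  (G.edgeSet ∆ G'.edgeSet).ncard

/-- Lexicographic key of an edge: the unordered pair written with its smaller endpoint first,
compared lexicographically. -/
def edgeKey [LinearOrder V] (e : Sym2 V) : Lex (V × V) :=
  Sym2.lift ⟨fun a b => toLex (min a b, max a b), fun a b => by simp only []; rw [min_comm, max_comm]⟩ e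

/-- `e` is among the `τ` smallest edges (in the fixed lexicographic order) incident to `v`
in `G`. -/
def clipKeep [Fintype V] [LinearOrder V] (G : SimpleGraph V) (τ : ℕ) (v : V)
    (e : Sym2 V) : Prop :=
  {e' ∈ G.incidenceSet v | edgeKey e' ≤ edgeKey e}.ncard ≤ τ

/-- The clipped graph `Clip G τ`: an edge of `G` is retained iff, for each of its two
endpoints `v`, it is among the `τ` smallest edges incident to `v` in `G`. -/
def Clip [Fintype V] [LinearOrder V] (G : SimpleGraph V) (τ : ℕ) : SimpleGraph V where
  Adj a b := G.Adj a b ∧ clipKeep G τ a s(a, b) ∧ clipKeep G τ b s(a, b)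
  symm := by
    refine ⟨fun a b h => ?_⟩
    refine ⟨h.1.symm, ?_, ?_⟩
    · rw [Sym2.eq_swap]; exact h.2.2
    · rw [Sym2.eq_swap]; exact h.2.1
  loopless := ⟨fun a h => G.irrefl h.1⟩

/-- Naive clipping: delete every edge having at least one endpoint of degree `> τ` in `G`. -/
def NaiveClip [Fintype V] (G : SimpleGraph V) (τ : ℕ) : SimpleGraph V where
  Adj a b := G.Adj a b ∧ deg G a ≤ τ ∧ deg G b ≤ τ
  symm := ⟨fun _ _ h => ⟨h.1.symm, h.2.2, h.2.1⟩⟩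
  loopless := ⟨fun a h => G.irrefl h.1⟩

/-- The graph obtained from `G` by deleting all vertices in `S` together with their
incident edges. -/
def deleteVerts (G : SimpleGraph V) (S : Set V) : SimpleGraph V where
  Adj a b := G.Adj a b ∧ a ∉ S ∧ b ∉ S
  symm := ⟨fun _ _ h => ⟨h.1.symm, h.2.2, h.2.1⟩⟩
  loopless := ⟨fun a h => G.irrefl h.1⟩

/-- `DelN G τ`: the minimum cardinality of a vertex set whose deletion bounds the maximum
degree of `G` by `τ`. (The paper's `Q_Del-N(G, τ)` equals `-DelN G τ`.) -/
def DelN [Fintype V] (G : SimpleGraph V) (τ : ℕ) : ℕ :=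
  sInf {n | ∃ S : Set V, S.ncard = n ∧ maxDeg (deleteVerts G S) ≤ τ}

/-- Total excess of vertex degrees over `τ`. (The paper's `Q_Del-Deg(G, τ)` equals
`-fExcess G τ / 2`.) -/
def fExcess [Fintype V] (G : SimpleGraph V) (τ : ℕ) : ℕ :=
  ∑ v, (deg G v - τ)

/-- A `τ`-feasible pair `(x, y)` for the LP relaxation of node deletion. -/
structure IsFeasible [Fintype V] (G : SimpleGraph V) (τ : ℕ) (x : V → ℝ)
    (y : Sym2 V → ℝ) : Prop where
  x_mem : ∀ v, x v ∈ Set.Icc (0 : ℝ) 1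
  y_mem : ∀ e ∈ G.edgeSet, y e ∈ Set.Icc (0 : ℝ) 1
  edge_cons : ∀ a b, G.Adj a b → 1 - x a - x b ≤ y s(a, b)
  deg_cons : ∀ v, ∑ᶠ e ∈ G.incidenceSet v, y e ≤ (τ : ℝ)

/-- The LP value: infimum of `Σ_v x_v` over all `τ`-feasible pairs.
(The paper's `Q_LP-Del-N(G, τ)` equals `-LPDelN G τ`.) -/
def LPDelN [Fintype V] (G : SimpleGraph V) (τ : ℕ) : ℝ :=
  sInf {t : ℝ | ∃ x y, IsFeasible G τ x y ∧ t = ∑ v, x v}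

open Classical in
lemma finsum_mem_set_eq' {s : Set (Sym2 V)} (hs : s.Finite) (f : Sym2 V → ℝ) :
    ∑ᶠ e ∈ s, f e = ∑ e ∈ hs.toFinset, f e := by
  rw [← finsum_mem_coe_finset, hs.coe_toFinset]

lemma feasible_one [Fintype V] (G : SimpleGraph V) (τ : ℕ) :
    IsFeasible G τ (fun _ => 1) (fun _ => 0) := by
  refine ⟨fun v => by norm_num, fun e _ => by norm_num, fun a b _ => by norm_num, fun v => ?_⟩
  simp

lemma lpset_nonempty [Fintype V] (G : SimpleGraph V) (τ : ℕ) :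
    {t : ℝ | ∃ x y, IsFeasible G τ x y ∧ t = ∑ v, x v}.Nonempty :=
  ⟨∑ _v : V, (1 : ℝ), fun _ => 1, fun _ => 0, feasible_one G τ, rfl⟩

lemma lpset_bdd [Fintype V] (G : SimpleGraph V) (τ : ℕ) :
    BddBelow {t : ℝ | ∃ x y, IsFeasible G τ x y ∧ t = ∑ v, x v} := by
  refine ⟨0, ?_⟩
  rintro t ⟨x, y, hf, rfl⟩
  exact Finset.sum_nonneg fun v _ => (hf.x_mem v).1

/-- For node-neighboring graphs `G ⊆ G'` differing at `u`,
`LPDelN(G, τ) ≤ LPDelN(G', τ) ≤ LPDelN(G, τ) + 1`: the query `Q_LP-Del-N = -LPDelN` has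
global sensitivity `1` under node-level neighboring and is sensitivity-monotonic. -/
theorem lpDelN_sensitivity [Fintype V]
    (G G' : SimpleGraph V) (u : V) (τ : ℕ)
    (hsub : G ≤ G')
    (hdiff : ∀ e ∈ G'.edgeSet, e ∉ G.edgeSet → u ∈ e) :
    LPDelN G τ ≤ LPDelN G' τ ∧ LPDelN G' τ ≤ LPDelN G τ + 1 := by
  classical
  have hedge : G.edgeSet ⊆ G'.edgeSet := SimpleGraph.edgeSet_mono hsub
  constructor
  · -- monotonicity: every feasible pair for G' is feasible for G
    apply csInf_le_csInf (lpset_bdd G τ) (lpset_nonempty G' τ)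
    rintro t ⟨x, y, hf, rfl⟩
    refine ⟨x, y, ⟨hf.x_mem, fun e he => hf.y_mem e (hedge he),
      fun a b hab => hf.edge_cons a b (hsub hab), fun v => ?_⟩, rfl⟩
    have hsubi : G.incidenceSet v ⊆ G'.incidenceSet v :=
      fun e he => ⟨hedge he.1, he.2⟩
    have h1 : (G.incidenceSet v).Finite := Set.toFinite _
    have h2 : (G'.incidenceSet v).Finite := Set.toFinite _
    rw [finsum_mem_set_eq' h1]
    refine le_trans ?_ (hf.deg_cons v)
    rw [finsum_mem_set_eq' h2]
    refine Finset.sum_le_sum_of_subset_of_nonneg ?_ ?_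
    · intro e he
      simp only [Set.Finite.mem_toFinset] at *
      exact hsubi he
    · intro e he _
      simp only [Set.Finite.mem_toFinset] at he
      exact (hf.y_mem e he.1).1
  · -- sensitivity: from feasible (x, y) for G, build feasible pair for G'
    have key : ∀ t ∈ {t : ℝ | ∃ x y, IsFeasible G τ x y ∧ t = ∑ v, x v},
        LPDelN G' τ ≤ t + 1 := by
      rintro t ⟨x, y, hf, rfl⟩
      set x' : V → ℝ := fun v => if v = u then 1 else x v with hx'
      set y' : Sym2 V → ℝ := fun e => if e ∈ G.edgeSet then y e else 0 with hy'
      have hx'ge : ∀ v, x v ≤ x' v := by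
        intro v
        by_cases h : v = u
        · simp only [hx', if_pos h, h]; exact (hf.x_mem u).2
        · simp [hx', h]
      have hx'mem : ∀ v, x' v ∈ Set.Icc (0 : ℝ) 1 := by
        intro v; by_cases h : v = u <;> simp [hx', h, hf.x_mem v]
      have hfeas : IsFeasible G' τ x' y' := by
        refine ⟨hx'mem, ?_, ?_, ?_⟩
        · intro e _
          by_cases h : e ∈ G.edgeSet
          · simpa [hy', h] using hf.y_mem e h
          · simp only [hy', if_neg h, Set.mem_Icc]; norm_num
        · intro a b hab
          by_cases h : s(a, b) ∈ G.edgeSet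
          · have := hf.edge_cons a b h
            have := hx'ge a
            have := hx'ge b
            simp only [hy', if_pos h]
            linarith
          · have hu : u ∈ s(a, b) := hdiff _ hab h
            simp only [hy', if_neg h]
            rw [Sym2.mem_iff] at hu
            have h0a := (hx'mem a).1
            have h0b := (hx'mem b).1
            rcases hu with rfl | rfl
            · have : x' u = 1 := by simp [hx']
              linarith
            · have : x' u = 1 := by simp [hx']
              linarith
        · intro v
          have h1 : (G.incidenceSet v).Finite := Set.toFinite _
          have h2 : (G'.incidenceSet v).Finite := Set.toFinite _
          rw [finsum_mem_set_eq' h2]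
          have hss : h1.toFinset ⊆ h2.toFinset := by
            intro e he
            simp only [Set.Finite.mem_toFinset] at *
            exact ⟨hedge he.1, he.2⟩
          have heq : ∑ e ∈ h2.toFinset, y' e = ∑ e ∈ h1.toFinset, y e := by
            have hzero : ∀ e ∈ h2.toFinset, e ∉ h1.toFinset → y' e = 0 := by
              intro e he hne
              simp only [Set.Finite.mem_toFinset] at he hne
              have : e ∉ G.edgeSet := fun hmem => hne ⟨hmem, he.2⟩
              simp [hy', this]
            rw [← Finset.sum_subset hss hzero]
            refine Finset.sum_congr rfl fun e he => ?_
            simp only [Set.Finite.mem_toFinset] at he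
            simp [hy', he.1]
          rw [heq, ← finsum_mem_set_eq' h1]
          exact hf.deg_cons v
      have hsum : ∑ v, x' v ≤ (∑ v, x v) + 1 := by
        have : ∀ v, x' v = x v + (if v = u then 1 - x u else 0) := by
          intro v; by_cases h : v = u <;> simp [hx', h]
        rw [Finset.sum_congr rfl fun v _ => this v, Finset.sum_add_distrib,
          Finset.sum_ite_eq' Finset.univ u (fun _ => 1 - x u)]
        simp only [Finset.mem_univ, if_pos]
        have := (hf.x_mem u).1
        linarith
      calc LPDelN G' τ ≤ ∑ v, x' v :=
            csInf_le (lpset_bdd G' τ) ⟨x', y', hfeas, rfl⟩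
        _ ≤ (∑ v, x v) + 1 := hsum
    have : LPDelN G' τ - 1 ≤ LPDelN G τ := by
      apply le_csInf (lpset_nonempty G τ)
      intro t ht
      linarith [key t ht]
    linarith

end
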